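/- Let P be a CPOS polygon such that each pair of consecutive great diagonals d_i, d_{i+1} meets in a unique point D(i+1/2) = P_i + λ(i+1/2)(P_{i+n} − P_i); assume λ(i+1/2) ≠ 1/2 and λ(i+1/2) ≠ λ(i+3/2) for every i. Call D(i_0+1/2) a cusp of the central symmetry set if λ(i_0+1/2) is a strict local extremum of the cyclic sequence (λ(i+1/2))_{i mod 2n}, i.e. λ(i_0+1/2) is either strictly greater than both λ(i_0−1/2) and λ(i_0+3/2), or strictly less than both. Then the number of indices i_0 ∈ {1, …, n} at which the central symmetry set has a cusp is odd, and it is greater than or equal to the number of indices i_0 ∈ {1, …, n} with (λ(i_0−1/2) − 1/2)(λ(i_0+1/2) − 1/2) < 0 (the number of cusps of the area evolute). -/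

import Mathlib

open scoped BigOperators Classical

/-- `det2 v w` is the determinant of the 2×2 matrix with columns `v, w ∈ ℝ²`. -/
noncomputable def det2 (v w : ℝ × ℝ) : ℝ := v.1 * w.2 - v.2 * w.1

/-- A convex polygon with parallel opposite sides (CPOS polygon): vertices `P i`, `i : ℤ`,
periodic with period `2n`; the side vectors `e(i+1/2) = P(i+1) - P i` satisfy
`e(i+n+1/2) ∥ e(i+1/2)`, no two adjacent sides are parallel, and the polygon is
positively oriented: `[e(i+1/2), e(j+1/2)] > 0` for `1 ≤ i < j ≤ n`. -/
structure CPOS (n : ℕ) : Type where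
  P : ℤ → ℝ × ℝ
  hn : 2 ≤ n
  periodic : ∀ i : ℤ, P (i + 2 * (n : ℤ)) = P i
  parallel : ∀ i : ℤ, ∃ t : ℝ, P (i + (n : ℤ) + 1) - P (i + (n : ℤ)) = t • (P (i + 1) - P i)
  adj_not_parallel : ∀ i : ℤ, det2 (P (i + 1) - P i) (P (i + 2) - P (i + 1)) ≠ 0
  oriented : ∀ i j : ℤ, 1 ≤ i → i < j → j ≤ (n : ℤ) →
    0 < det2 (P (i + 1) - P i) (P (j + 1) - P j)

/-- `onDiag P n i x` : the point `x` lies on the great diagonal `d_i`,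
the line through `P i` and `P (i+n)`. -/
def onDiag (P : ℤ → ℝ × ℝ) (n : ℕ) (i : ℤ) (x : ℝ × ℝ) : Prop :=
  ∃ t : ℝ, x = P i + t • (P (i + (n : ℤ)) - P i)

/-! ### Auxiliary lemmas about `det2` -/

lemma det2_swap (v w : ℝ × ℝ) : det2 v w = - det2 w v := by simp [det2]; ring
lemma det2_self (v : ℝ × ℝ) : det2 v v = 0 := by simp [det2]; ring
lemma det2_smul_left (t : ℝ) (v w : ℝ × ℝ) : det2 (t • v) w = t * det2 v w := by
  simp [det2]; ring
lemma det2_zero_right (v : ℝ × ℝ) : det2 v 0 = 0 := by simp [det2]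
lemma det2_add_right (v a b : ℝ × ℝ) : det2 v (a + b) = det2 v a + det2 v b := by
  simp [det2]; ring

lemma det2_sum {α : Type*} (v : ℝ × ℝ) (s : Finset α) (w : α → ℝ × ℝ) :
    det2 v (∑ i ∈ s, w i) = ∑ i ∈ s, det2 v (w i) := by
  classical
  induction s using Finset.induction with
  | empty => simpa using det2_zero_right v
  | insert _ _ h ih => rw [Finset.sum_insert h, Finset.sum_insert h, det2_add_right, ih]

/-! ### Nondegeneracy of the great diagonals `d_0` and `d_1` -/

lemma nondeg_zero {n : ℕ} (C : CPOS n) : C.P ((n:ℤ)) ≠ C.P 0 := by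
  intro h
  have hn2 : 2 ≤ n := C.hn
  set F : ℕ → ℝ × ℝ := fun k => C.P (k:ℤ) with hF
  have htel : ∑ k ∈ Finset.range n, (F (k+1) - F k) = F n - F 0 := Finset.sum_range_sub F n
  have hzero : F n - F 0 = 0 := by simp [hF, h]
  set en : ℝ × ℝ := C.P ((n:ℤ)+1) - C.P (n:ℤ) with hen
  obtain ⟨t, ht⟩ := C.parallel 0
  have ht' : en = t • (C.P 1 - C.P 0) := by
    rw [hen]
    have e1 : (0:ℤ) + (n:ℤ) + 1 = (n:ℤ) + 1 := by ring
    have e2 : (0:ℤ) + (n:ℤ) = (n:ℤ) := by ring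
    have e3 : (0:ℤ) + 1 = 1 := by ring
    rw [e1, e2, e3] at ht
    exact ht
  have hterm : ∀ k ∈ Finset.range n, 1 ≤ k → 0 < - det2 en (F (k+1) - F k) := by
    intro k hk hk1
    have hk' : (1:ℤ) ≤ (k:ℤ) := by exact_mod_cast hk1
    have hkn : (k:ℤ) < (n:ℤ) := by exact_mod_cast Finset.mem_range.1 hk
    have hor := C.oriented (k:ℤ) (n:ℤ) hk' hkn le_rfl
    have hFk : F (k+1) - F k = C.P ((k:ℤ)+1) - C.P (k:ℤ) := by
      simp only [hF]; push_cast; ring_nf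
    rw [hFk, det2_swap]
    simpa [hen] using hor
  have hsum : ∑ k ∈ Finset.range n, det2 en (F (k+1) - F k) = 0 := by
    rw [← det2_sum, htel, hzero, det2_zero_right]
  have hneg : 0 < ∑ k ∈ Finset.range n, (- det2 en (F (k+1) - F k)) := by
    apply Finset.sum_pos'
    · intro k hk
      rcases Nat.eq_zero_or_pos k with rfl | hkpos
      · have hF10 : F 1 - F 0 = C.P 1 - C.P 0 := by simp [hF]
        have : det2 en (F (0+1) - F 0) = 0 := by
          rw [show (0+1 : ℕ) = 1 from rfl, hF10, ht', det2_smul_left, det2_self, mul_zero]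
        simp [this]
      · exact le_of_lt (hterm k hk hkpos)
    · exact ⟨1, Finset.mem_range.2 (by omega), hterm 1 (Finset.mem_range.2 (by omega)) le_rfl⟩
  rw [Finset.sum_neg_distrib] at hneg
  linarith [hsum, hneg]

lemma nondeg_one {n : ℕ} (C : CPOS n) : C.P (1 + (n:ℤ)) ≠ C.P 1 := by
  intro h
  have hn2 : 2 ≤ n := C.hn
  set G : ℕ → ℝ × ℝ := fun k => C.P (1 + (k:ℤ)) with hG
  have htel : ∑ k ∈ Finset.range n, (G (k+1) - G k) = G n - G 0 := Finset.sum_range_sub G n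
  have hzero : G n - G 0 = 0 := by
    simp only [hG]
    rw [show ((0:ℕ):ℤ) = (0:ℤ) from rfl]
    rw [h]
    simp
  set e1 : ℝ × ℝ := C.P 2 - C.P 1 with he1
  have hterm : ∀ k ∈ Finset.range n, 1 ≤ k → 0 < det2 e1 (G (k+1) - G k) := by
    intro k hk hk1
    have hk' : (1:ℤ) < 1 + (k:ℤ) := by
      have : (1:ℤ) ≤ (k:ℤ) := by exact_mod_cast hk1
      omega
    have hkn : 1 + (k:ℤ) ≤ (n:ℤ) := by
      have : (k:ℤ) < (n:ℤ) := by exact_mod_cast Finset.mem_range.1 hk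
      omega
    have hor := C.oriented 1 (1 + (k:ℤ)) le_rfl hk' hkn
    have hGk : G (k+1) - G k = C.P ((1 + (k:ℤ))+1) - C.P (1 + (k:ℤ)) := by
      simp only [hG]; push_cast; ring_nf
    rw [hGk, he1]
    rw [show ((1:ℤ)+1) = (2:ℤ) from rfl] at hor
    exact hor
  have hsum : ∑ k ∈ Finset.range n, det2 e1 (G (k+1) - G k) = 0 := by
    rw [← det2_sum, htel, hzero, det2_zero_right]
  have hpos : 0 < ∑ k ∈ Finset.range n, det2 e1 (G (k+1) - G k) := by
    apply Finset.sum_pos'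
    · intro k hk
      rcases Nat.eq_zero_or_pos k with rfl | hkpos
      · have : G (0+1) - G 0 = C.P 2 - C.P 1 := by
          simp only [hG]; norm_num
        rw [this, ← he1, det2_self]
      · exact le_of_lt (hterm k hk hkpos)
    · exact ⟨1, Finset.mem_range.2 (by omega), hterm 1 (Finset.mem_range.2 (by omega)) le_rfl⟩
  linarith

/-- The antisymmetry relation `λ(a+n) = 1 - λ(a)` at a base index `a` whose great
diagonal is nondegenerate. -/
lemma lam_rel {n : ℕ} (Q : ℤ → ℝ × ℝ) (D : ℤ → ℝ × ℝ) (lam : ℤ → ℝ) (a : ℤ)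
    (hnd : Q (a + (n:ℤ)) ≠ Q a)
    (hlam : ∀ i : ℤ, D i = Q i + lam i • (Q (i + (n : ℤ)) - Q i))
    (hDper : ∀ i : ℤ, D (i + (n : ℤ)) = D i)
    (hper : ∀ i : ℤ, Q (i + 2 * (n : ℤ)) = Q i) :
    lam (a + (n:ℤ)) = 1 - lam a := by
  have hD0 := hDper a
  have e0 := hlam a
  have en := hlam (a + (n:ℤ))
  have hPP : Q (a + (n:ℤ) + (n:ℤ)) = Q a := by
    rw [show a + (n:ℤ) + (n:ℤ) = a + 2 * (n:ℤ) from by ring]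
    exact hper a
  rw [hPP] at en
  set v : ℝ × ℝ := Q (a + (n:ℤ)) - Q a with hv
  have h3 : Q a + lam a • v = Q (a + (n:ℤ)) + lam (a + (n:ℤ)) • (Q a - Q (a + (n:ℤ))) := by
    rw [← e0, ← en, hD0]
  have h6 : Q a + lam a • v + lam (a + (n:ℤ)) • v = Q (a + (n:ℤ)) := by
    rw [h3, show Q a - Q (a + (n:ℤ)) = -v from by rw [hv]; abel, smul_neg]
    abel
  have key : (lam a + lam (a + (n:ℤ)) - 1) • v = 0 := by
    rw [sub_smul, add_smul, one_smul]
    have h7 : lam a • v + lam (a + (n:ℤ)) • v = v := by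
      have := h6
      rw [hv] at this ⊢
      abel_nf at this ⊢
      linear_combination (norm := abel) this
    rw [h7]; abel
  rcases smul_eq_zero.mp key with hco | hv0
  · linarith
  · exact absurd (by rw [hv] at hv0; exact sub_eq_zero.mp hv0) hnd

/-! ### Combinatorial lemmas about flip counts of boolean sequences -/

lemma icc_ins (N : ℕ) : Finset.Icc (1:ℤ) ((N:ℤ)+1) = insert ((N:ℤ)+1) (Finset.Icc (1:ℤ) (N:ℤ)) := by
  ext x; simp only [Finset.mem_Icc, Finset.mem_insert]; omega

lemma flip_parity (f : ℤ → Bool) : ∀ N : ℕ,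
    (((Finset.Icc (1:ℤ) (N:ℤ)).filter (fun i => f (i-1) ≠ f i)).card) % 2
      = if f 0 = f (N:ℤ) then 0 else 1 := by
  intro N
  induction N with
  | zero => simp
  | succ N ih =>
    have hcast : ((N+1 : ℕ) : ℤ) = (N:ℤ)+1 := by push_cast; ring
    have hnotmem : ((N:ℤ)+1) ∉ Finset.Icc (1:ℤ) (N:ℤ) := by simp
    have hsub : ((N:ℤ)+1) - 1 = (N:ℤ) := by ring
    rw [hcast, icc_ins, Finset.filter_insert, hsub]
    by_cases hf : f (N:ℤ) ≠ f ((N:ℤ)+1)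
    · rw [if_pos hf, Finset.card_insert_of_notMem (fun h => hnotmem (Finset.mem_of_mem_filter _ h))]
      cases hb0 : f 0 <;> cases hbN : f (N:ℤ) <;> cases hbN1 : f ((N:ℤ)+1) <;>
        simp_all <;> omega
    · rw [if_neg hf]
      cases hb0 : f 0 <;> cases hbN : f (N:ℤ) <;> cases hbN1 : f ((N:ℤ)+1) <;>
        simp_all <;> omega

lemma flip_le (f g : ℤ → Bool) (hbc : ∀ i : ℤ, g (i-1) ≠ g i → f (i-1) = g i) : ∀ N : ℕ,
    ((Finset.Icc (1:ℤ) (N:ℤ)).filter (fun i => g (i-1) ≠ g i)).card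
      ≤ ((Finset.Icc (1:ℤ) (N:ℤ)).filter (fun i => f (i-1) ≠ f i)).card + 1
    ∧ (((Finset.Icc (1:ℤ) (N:ℤ)).filter (fun i => g (i-1) ≠ g i)).card
      = ((Finset.Icc (1:ℤ) (N:ℤ)).filter (fun i => f (i-1) ≠ f i)).card + 1
        → f (N:ℤ) = g (N:ℤ)) := by
  intro N
  induction N with
  | zero => simp
  | succ N ih =>
    obtain ⟨ih1, ih2⟩ := ih
    have hcast : ((N+1 : ℕ) : ℤ) = (N:ℤ)+1 := by push_cast; ring
    have hnotmem : ((N:ℤ)+1) ∉ Finset.Icc (1:ℤ) (N:ℤ) := by simp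
    have hsub : ((N:ℤ)+1) - 1 = (N:ℤ) := by ring
    rw [hcast, icc_ins, Finset.filter_insert, Finset.filter_insert, hsub]
    by_cases hg : g (N:ℤ) ≠ g ((N:ℤ)+1)
    · have hfg : f (N:ℤ) = g ((N:ℤ)+1) := by
        have := hbc ((N:ℤ)+1); rw [hsub] at this; exact this hg
      have hZE : ¬ (((Finset.Icc (1:ℤ) (N:ℤ)).filter (fun i => g (i-1) ≠ g i)).card
          = ((Finset.Icc (1:ℤ) (N:ℤ)).filter (fun i => f (i-1) ≠ f i)).card + 1) := by
        intro h
        have := ih2 h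
        rw [hfg] at this
        exact hg this.symm
      rw [if_pos hg, Finset.card_insert_of_notMem (fun h => hnotmem (Finset.mem_of_mem_filter _ h))]
      by_cases hf : f (N:ℤ) ≠ f ((N:ℤ)+1)
      · rw [if_pos hf, Finset.card_insert_of_notMem (fun h => hnotmem (Finset.mem_of_mem_filter _ h))]
        exact ⟨by omega, fun h => by omega⟩
      · rw [if_neg hf]
        push_neg at hf
        exact ⟨by omega, fun _ => by rw [← hf, hfg]⟩
    · rw [if_neg hg]
      push_neg at hg
      by_cases hf : f (N:ℤ) ≠ f ((N:ℤ)+1)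
      · rw [if_pos hf, Finset.card_insert_of_notMem (fun h => hnotmem (Finset.mem_of_mem_filter _ h))]
        exact ⟨by omega, fun h => by omega⟩
      · rw [if_neg hf]
        push_neg at hf
        refine ⟨ih1, fun h => ?_⟩
        rw [← hf, ← hg]; exact ih2 h

/-- For a CPOS polygon with `D(i+1/2) = P_i + λ(i+1/2)(P_{i+n} - P_i)` the
unique intersection of `d_i` and `d_{i+1}`, `λ(i+1/2) ≠ 1/2`, and `λ(i+1/2) ≠ λ(i+3/2)` for
all `i`: the number of cusps of the central symmetry set — indices `i₀ ∈ {1,…,n}` where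
`λ(i₀+1/2)` is a strict local extremum of the cyclic sequence — is odd, and it is at least
the number of cusps of the area evolute — indices `i₀ ∈ {1,…,n}` with
`(λ(i₀-1/2) - 1/2)(λ(i₀+1/2) - 1/2) < 0`. (Here `lam i` stands for `λ(i+1/2)`.) -/
theorem statement3 {n : ℕ} (C : CPOS n) (D : ℤ → ℝ × ℝ) (lam : ℤ → ℝ)
    (hD : ∀ i : ℤ, onDiag C.P n i (D i) ∧ onDiag C.P n (i + 1) (D i))
    (huniq : ∀ i : ℤ, ∀ x : ℝ × ℝ, onDiag C.P n i x ∧ onDiag C.P n (i + 1) x → x = D i)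
    (hlam : ∀ i : ℤ, D i = C.P i + lam i • (C.P (i + (n : ℤ)) - C.P i))
    (hDper : ∀ i : ℤ, D (i + (n : ℤ)) = D i)
    (hhalf : ∀ i : ℤ, lam i ≠ 1 / 2)
    (hne : ∀ i : ℤ, lam i ≠ lam (i + 1)) :
    Odd ((Finset.Icc (1 : ℤ) (n : ℤ)).filter
        (fun i => (lam (i - 1) < lam i ∧ lam (i + 1) < lam i) ∨
          (lam i < lam (i - 1) ∧ lam i < lam (i + 1)))).card ∧
    ((Finset.Icc (1 : ℤ) (n : ℤ)).filter
        (fun i => (lam (i - 1) - 1 / 2) * (lam i - 1 / 2) < 0)).card ≤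
      ((Finset.Icc (1 : ℤ) (n : ℤ)).filter
        (fun i => (lam (i - 1) < lam i ∧ lam (i + 1) < lam i) ∨
          (lam i < lam (i - 1) ∧ lam i < lam (i + 1)))).card := by
  classical
  -- the antisymmetry relations we need
  have hl0 : lam (n:ℤ) = 1 - lam 0 := by
    have := lam_rel C.P D lam 0 (by rw [zero_add]; exact nondeg_zero C) hlam hDper C.periodic
    rwa [zero_add] at this
  have hl1 : lam ((n:ℤ) + 1) = 1 - lam 1 := by
    have := lam_rel C.P D lam 1 (nondeg_one C) hlam hDper C.periodic
    rwa [show (1:ℤ) + (n:ℤ) = (n:ℤ) + 1 from by ring] at this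
  -- boolean sequences
  set b : ℤ → Bool := fun j => decide (lam j < lam (j+1)) with hbdef
  set c : ℤ → Bool := fun j => decide ((1:ℝ)/2 < lam j) with hcdef
  -- rewrite the extremum filter as a flip filter for b
  have hne' : ∀ i : ℤ, lam (i - 1) ≠ lam i := by
    intro i
    have := hne (i - 1)
    rwa [show i - 1 + 1 = i from by ring] at this
  have hEeq : (Finset.Icc (1 : ℤ) (n : ℤ)).filter
        (fun i => (lam (i - 1) < lam i ∧ lam (i + 1) < lam i) ∨
          (lam i < lam (i - 1) ∧ lam i < lam (i + 1)))
      = (Finset.Icc (1 : ℤ) (n : ℤ)).filter (fun i => b (i-1) ≠ b i) := by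
    apply Finset.filter_congr
    intro i _
    have hb1 : b (i-1) = decide (lam (i-1) < lam i) := by
      rw [hbdef]
      simp only []
      rw [show i - 1 + 1 = i from by ring]
    rw [hb1, hbdef]
    simp only [ne_eq, decide_eq_decide]
    constructor
    · rintro (⟨hA, hB⟩ | ⟨hC, hD'⟩) <;> intro hiff
      · exact absurd (hiff.mp hA) (not_lt.mpr hB.le)
      · exact absurd (hiff.mpr hD') (not_lt.mpr hC.le)
    · intro hni
      by_cases hx : lam (i-1) < lam i
      · have hy : ¬ lam i < lam (i+1) := fun hy => hni ⟨fun _ => hy, fun _ => hx⟩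
        exact Or.inl ⟨hx, lt_of_le_of_ne (not_lt.mp hy) (Ne.symm (hne i))⟩
      · have hy : lam i < lam (i+1) := by
          by_contra hy
          exact hni ⟨fun h => absurd h hx, fun h => absurd h hy⟩
        exact Or.inr ⟨lt_of_le_of_ne (not_lt.mp hx) (Ne.symm (hne' i)), hy⟩
  -- rewrite the sign-change filter as a flip filter for c
  have hZeq : (Finset.Icc (1 : ℤ) (n : ℤ)).filter
        (fun i => (lam (i - 1) - 1 / 2) * (lam i - 1 / 2) < 0)
      = (Finset.Icc (1 : ℤ) (n : ℤ)).filter (fun i => c (i-1) ≠ c i) := by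
    apply Finset.filter_congr
    intro i _
    rw [hcdef]
    simp only [ne_eq, decide_eq_decide]
    rw [mul_neg_iff, sub_pos, sub_neg, sub_pos, sub_neg]
    constructor
    · rintro (⟨ha, hb'⟩ | ⟨ha, hb'⟩) <;> intro hiff
      · exact absurd (hiff.mp ha) (not_lt.mpr hb'.le)
      · exact absurd (hiff.mpr hb') (not_lt.mpr ha.le)
    · intro hni
      by_cases hx : 1/2 < lam (i-1)
      · have hy : ¬ ((1:ℝ)/2 < lam i) := fun hy => hni ⟨fun _ => hy, fun _ => hx⟩
        exact Or.inl ⟨hx, lt_of_le_of_ne (not_lt.mp hy) (hhalf i)⟩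
      · have hy : (1:ℝ)/2 < lam i := by
          by_contra hy
          exact hni ⟨fun h => absurd h hx, fun h => absurd h hy⟩
        exact Or.inr ⟨lt_of_le_of_ne (not_lt.mp hx) (hhalf (i-1)), hy⟩
  -- boundary conditions
  have hb0 : b 0 = decide (lam 0 < lam 1) := by
    rw [hbdef]; norm_num
  have hne01 : lam 0 ≠ lam 1 := by
    have := hne 0; rwa [show (0:ℤ)+1 = 1 from by norm_num] at this
  have hbn : b (n:ℤ) = !(b 0) := by
    rw [hbdef]
    simp only []
    rw [show (0:ℤ)+1 = 1 from by norm_num, hl0, hl1]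
    have hiff : (1 - lam 0 < 1 - lam 1) ↔ ¬ (lam 0 < lam 1) := by
      constructor
      · intro h hlt; linarith
      · intro h
        have h1 : lam 1 ≤ lam 0 := not_lt.mp h
        have h2 : lam 1 < lam 0 := lt_of_le_of_ne h1 (Ne.symm hne01)
        linarith
    rw [show (decide (1 - lam 0 < 1 - lam 1)) = decide (¬ (lam 0 < lam 1)) from by
      simp only [hiff], decide_not]
  have hcn : c (n:ℤ) = !(c 0) := by
    rw [hcdef]
    simp only []
    rw [hl0]
    have hiff : ((1:ℝ)/2 < 1 - lam 0) ↔ ¬ ((1:ℝ)/2 < lam 0) := by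
      constructor
      · intro h hlt; linarith
      · intro h
        have h1 : lam 0 ≤ 1/2 := not_lt.mp h
        have h2 : lam 0 < 1/2 := lt_of_le_of_ne h1 (hhalf 0)
        linarith
    rw [show (decide ((1:ℝ)/2 < 1 - lam 0)) = decide (¬ ((1:ℝ)/2 < lam 0)) from by
      simp only [hiff], decide_not]
  -- the connection between c-flips and b
  have hbc : ∀ i : ℤ, c (i-1) ≠ c i → b (i-1) = c i := by
    intro i hci
    rw [hcdef] at hci
    simp only [ne_eq, decide_eq_decide] at hci
    have hb1 : b (i-1) = decide (lam (i-1) < lam i) := by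
      rw [hbdef]
      simp only []
      rw [show i - 1 + 1 = i from by ring]
    rw [hb1, hcdef]
    simp only [decide_eq_decide]
    by_cases h : (1:ℝ)/2 < lam i
    · have hx : ¬ ((1:ℝ)/2 < lam (i-1)) := fun hx => hci ⟨fun _ => h, fun _ => hx⟩
      have : lam (i-1) < lam i := lt_of_le_of_lt (not_lt.mp hx) h
      exact ⟨fun _ => h, fun _ => this⟩
    · have hx : (1:ℝ)/2 < lam (i-1) := by
        by_contra hx
        exact hci ⟨fun h' => absurd h' hx, fun h' => absurd h' h⟩
      have hlt : ¬ (lam (i-1) < lam i) := by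
        have : lam i ≤ 1/2 := not_lt.mp h
        intro h'; linarith
      exact ⟨fun h' => absurd h' hlt, fun h' => absurd h' h⟩
  -- put everything together
  have Epar := flip_parity b n
  have Zpar := flip_parity c n
  have hb0n : ¬ (b 0 = b (n:ℤ)) := by
    rw [hbn]; cases b 0 <;> simp
  have hc0n : ¬ (c 0 = c (n:ℤ)) := by
    rw [hcn]; cases c 0 <;> simp
  rw [if_neg hb0n] at Epar
  rw [if_neg hc0n] at Zpar
  have hle := (flip_le b c hbc n).1
  constructor
  · rw [hEeq]
    exact Nat.odd_iff.mpr Epar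
  · rw [hEeq, hZeq]
    omega
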